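/- Let Σ, Σ̂ be self-adjoint positive trace-class operators on a separable Hilbert space, with Σ having distinct eigenvalues μ₁ > μ₂ > ... > 0 with multiplicities m_r and spectral projections P_r, and Σ̂ with eigenvalues λ̂₁ ≥ λ̂₂ ≥ .... Let r ≥ 1 and suppose that the empirical eigenvalues satisfy the separation |λ̂_j − μ_r| ≤ |μ_r − μ_s|/2 for all j ∈ I_r and all s ≠ r, where I_r = {j : λ_j = μ_r}, and let P̂_r = ∑_{j∈I_r} û_j ⊗ û_j. Then for every s ≠ r, ‖P̂_r P_s‖₂ ≤ 2 ‖P̂_r E P_s‖₂ / |μ_r − μ_s| with E = Σ̂ − Σ. -/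
import Mathlib


open scoped RealInnerProductSpace

/-- Squared Hilbert–Schmidt norm `‖T‖₂² = ∑_i ‖T e_i‖²` with respect to a Hilbert basis. -/
noncomputable def hsNormSq {H : Type*} [NormedAddCommGroup H] [InnerProductSpace ℝ H]
    {ι : Type*} (e : ι → H) (T : H →L[ℝ] H) : ℝ :=
  ∑' i, ‖T (e i)‖ ^ 2

lemma norm_sum_sq_orthonormal {H : Type*} [NormedAddCommGroup H] [InnerProductSpace ℝ H]
    (I : Finset ℕ) (u : ℕ → H) (hu : Orthonormal ℝ u) (c : ℕ → ℝ) :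
    ‖∑ j ∈ I, c j • u j‖ ^ 2 = ∑ j ∈ I, (c j) ^ 2 := by
  rw [← real_inner_self_eq_norm_sq, Orthonormal.inner_sum hu c c I]
  simp [sq]

theorem stmt14
    {H : Type*} [NormedAddCommGroup H] [InnerProductSpace ℝ H] [CompleteSpace H]
    {ι : Type*} (e : HilbertBasis ι ℝ H)
    (Sig Sighat : H →L[ℝ] H)
    (hSA : IsSelfAdjoint Sig) (hSAhat : IsSelfAdjoint Sighat)
    (hpos : ∀ v : H, 0 ≤ ⟪v, Sig v⟫) (hposhat : ∀ v : H, 0 ≤ ⟪v, Sighat v⟫)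
    (I : Finset ℕ) (uhat : ℕ → H) (lamhat : ℕ → ℝ)
    (huhat : Orthonormal ℝ uhat)
    (heighat : ∀ j ∈ I, Sighat (uhat j) = lamhat j • uhat j)
    (mur mus : ℝ) (hne : mur ≠ mus)
    (Ps : H →L[ℝ] H) (hPs : IsSelfAdjoint Ps) (hPsidem : IsIdempotentElem Ps)
    (hPseig : Sig ∘L Ps = mus • Ps)
    (hsep : ∀ j ∈ I, |lamhat j - mur| ≤ |mur - mus| / 2)
    (Phatr : H →L[ℝ] H)
    (hPhatr : Phatr = ∑ j ∈ I, (innerSL ℝ (uhat j)).smulRight (uhat j)) :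
    Real.sqrt (hsNormSq e (Phatr ∘L Ps)) ≤
      2 * Real.sqrt (hsNormSq e (Phatr ∘L (Sighat - Sig) ∘L Ps)) / |mur - mus| := by
  classical
  have hc : 0 < |mur - mus| := abs_pos.mpr (sub_ne_zero.mpr hne)
  set c := |mur - mus| with hcdef
  have hsymhat := ContinuousLinearMap.isSelfAdjoint_iff_isSymmetric.mp hSAhat
  have hsymPs := ContinuousLinearMap.isSelfAdjoint_iff_isSymmetric.mp hPs
  set b : ℕ → H → ℝ := fun j x => ⟪uhat j, Ps x⟫ with hb
  set A := Phatr ∘L Ps with hAdef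
  set B := Phatr ∘L (Sighat - Sig) ∘L Ps with hBdef
  have hA : ∀ x : H, A x = ∑ j ∈ I, b j x • uhat j := by
    intro x
    simp [hAdef, hPhatr, ContinuousLinearMap.sum_apply, hb]
  have hEcoef : ∀ j ∈ I, ∀ x : H,
      ⟪uhat j, (Sighat - Sig) (Ps x)⟫ = (lamhat j - mus) * b j x := by
    intro j hj x
    have h1 : ⟪uhat j, Sighat (Ps x)⟫ = lamhat j * b j x := by
      have hs : ⟪uhat j, Sighat (Ps x)⟫ = ⟪Sighat (uhat j), Ps x⟫ :=
        (hsymhat (uhat j) (Ps x)).symm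
      rw [hs, heighat j hj, real_inner_smul_left]
    have h2 : Sig (Ps x) = mus • Ps x := by
      have := congrArg (fun T : H →L[ℝ] H => T x) hPseig
      simpa using this
    have h3 : ⟪uhat j, Sig (Ps x)⟫ = mus * b j x := by
      rw [h2, real_inner_smul_right]
    rw [ContinuousLinearMap.sub_apply, inner_sub_right, h1, h3]
    ring
  have hB : ∀ x : H, B x = ∑ j ∈ I, ((lamhat j - mus) * b j x) • uhat j := by
    intro x
    have : B x = Phatr ((Sighat - Sig) (Ps x)) := rfl
    rw [this, hPhatr]
    rw [ContinuousLinearMap.sum_apply]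
    refine Finset.sum_congr rfl fun j hj => ?_
    simp only [ContinuousLinearMap.smulRight_apply, innerSL_apply_apply]
    rw [hEcoef j hj x]
  have hnA : ∀ x : H, ‖A x‖ ^ 2 = ∑ j ∈ I, (b j x) ^ 2 := by
    intro x; rw [hA x, norm_sum_sq_orthonormal I uhat huhat]
  have hnB : ∀ x : H, ‖B x‖ ^ 2 = ∑ j ∈ I, ((lamhat j - mus) * b j x) ^ 2 := by
    intro x; rw [hB x, norm_sum_sq_orthonormal I uhat huhat]
  -- pointwise inequality
  have hpt : ∀ x : H, c ^ 2 * ‖A x‖ ^ 2 ≤ 4 * ‖B x‖ ^ 2 := by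
    intro x
    rw [hnA x, hnB x, Finset.mul_sum, Finset.mul_sum]
    refine Finset.sum_le_sum fun j hj => ?_
    have hsep' : c / 2 ≤ |lamhat j - mus| := by
      have h1 := hsep j hj
      have h2 : c ≤ |mur - lamhat j| + |lamhat j - mus| := abs_sub_le mur (lamhat j) mus
      have h3 : |mur - lamhat j| = |lamhat j - mur| := abs_sub_comm _ _
      linarith
    have h5 : (c / 2) ^ 2 ≤ (lamhat j - mus) ^ 2 := by
      rw [← sq_abs (lamhat j - mus)]
      have : (0:ℝ) ≤ c / 2 := by positivity
      exact pow_le_pow_left₀ this hsep' 2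
    nlinarith [mul_le_mul_of_nonneg_right h5 (sq_nonneg (b j x)), sq_nonneg (b j x)]
  -- summability
  have hsummand : ∀ j ∈ I, Summable (fun i : ι => (b j (e i)) ^ 2) := by
    intro j hj
    have hrw : ∀ i : ι, (b j (e i)) ^ 2 = ⟪Ps (uhat j), e i⟫ * ⟪e i, Ps (uhat j)⟫ := by
      intro i
      have : b j (e i) = ⟪Ps (uhat j), e i⟫ := (hsymPs (uhat j) (e i)).symm
      rw [this, sq, real_inner_comm (Ps (uhat j)) (e i)]
    simpa [hrw] using e.summable_inner_mul_inner (Ps (uhat j)) (Ps (uhat j))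
  have hsumA : Summable (fun i : ι => ‖A (e i)‖ ^ 2) := by
    have : (fun i : ι => ‖A (e i)‖ ^ 2) = fun i => ∑ j ∈ I, (b j (e i)) ^ 2 := by
      funext i; exact hnA (e i)
    rw [this]
    exact summable_sum fun j hj => hsummand j hj
  have hsumB : Summable (fun i : ι => ‖B (e i)‖ ^ 2) := by
    have : (fun i : ι => ‖B (e i)‖ ^ 2)
        = fun i => ∑ j ∈ I, (lamhat j - mus) ^ 2 * (b j (e i)) ^ 2 := by
      funext i; rw [hnB (e i)]
      exact Finset.sum_congr rfl fun j hj => by ring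
    rw [this]
    exact summable_sum fun j hj => (hsummand j hj).mul_left _
  have hA0 : 0 ≤ hsNormSq e A := tsum_nonneg fun i => by positivity
  have hB0 : 0 ≤ hsNormSq e B := tsum_nonneg fun i => by positivity
  have hts : c ^ 2 * hsNormSq e A ≤ 4 * hsNormSq e B := by
    unfold hsNormSq
    rw [← tsum_mul_left, ← tsum_mul_left]
    exact Summable.tsum_le_tsum (fun i => hpt (e i)) (hsumA.mul_left _) (hsumB.mul_left _)
  rw [le_div_iff₀ hc]
  calc Real.sqrt (hsNormSq e A) * c
      = Real.sqrt (hsNormSq e A) * Real.sqrt (c ^ 2) := by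
        rw [Real.sqrt_sq hc.le]
    _ = Real.sqrt (c ^ 2 * hsNormSq e A) := by
        rw [mul_comm (c ^ 2)]; exact (Real.sqrt_mul hA0 _).symm
    _ ≤ Real.sqrt (4 * hsNormSq e B) := Real.sqrt_le_sqrt hts
    _ = 2 * Real.sqrt (hsNormSq e B) := by
        rw [Real.sqrt_mul (by norm_num), show (4:ℝ) = 2 ^ 2 by norm_num,
          Real.sqrt_sq (by norm_num)]
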